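/- arXiv:1708.00722 — 3 statements merged into one kernel-verified Lean document; each statement's English description precedes it below -/
import Mathlib

section
/- In a CI-loop (Q, ·, 1), the map J is an automorphism of (Q, ·), i.e., J(x · y) = J(x) · J(y) for all x, y ∈ Q. -/
theorem stmt_10 {Q : Type*} (mul : Q → Q → Q) (one : Q)
    (hq1 : ∀ a b, ∃! x, mul a x = b) (hq2 : ∀ a b, ∃! y, mul y a = b)
    (hone : ∀ x, mul one x = x ∧ mul x one = x)
    (J : Q → Q) (hJ : Function.Bijective J)
    (hinv : ∀ x, mul x (J x) = one)
    (hCI : ∀ x y, mul (mul x y) (J x) = y) :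
    ∀ x y, J (mul x y) = mul (J x) (J y) := by
  intro x y
  have h1 : mul y (J (mul x y)) = J x := by
    have h := hCI (mul x y) (J x)
    rwa [hCI x y] at h
  have h2 := hCI y (J (mul x y))
  rw [h1] at h2
  exact h2.symm
end

section
/- A finite groupoid (Q, ·) satisfying the left CI identity (x · y) · J_r(x) = y for some map J_r : Q → Q is a quasigroup. -/
theorem stmt_16 {Q : Type*} [Finite Q] (mul : Q → Q → Q) (Jr : Q → Q)
    (hCI : ∀ x y, mul (mul x y) (Jr x) = y) :
    ∀ a b, (∃! x, mul a x = b) ∧ (∃! y, mul y a = b) := by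
  have hLinj : ∀ x, Function.Injective (mul x) := by
    intro x y y' h
    have h1 := hCI x y
    rw [h, hCI] at h1
    exact h1.symm
  have hLbij : ∀ x, Function.Bijective (mul x) :=
    fun x => Finite.injective_iff_bijective.mp (hLinj x)
  have hRinj : ∀ x, Function.Injective (fun z => mul z (Jr x)) := by
    intro x z z' h
    obtain ⟨y, hy⟩ := (hLbij x).2 z
    obtain ⟨y', hy'⟩ := (hLbij x).2 z'
    subst hy; subst hy'
    simp only [hCI] at h
    rw [h]
  have hJinj : Function.Injective Jr := by
    intro a b hab
    have hmul : ∀ y, mul a y = mul b y := by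
      intro y
      apply hRinj a
      show mul (mul a y) (Jr a) = mul (mul b y) (Jr a)
      rw [hCI, hab, hCI]
    obtain ⟨y, hy⟩ := (hLbij a).2 a
    obtain ⟨y', hy'⟩ := (hLbij a).2 b
    have h1 := hCI a y
    rw [hy] at h1
    have h2 := hCI a y'
    rw [hy'] at h2
    have h3 := hmul (Jr a)
    rw [h1, h2] at h3
    rw [← hy, ← hy', h3]
  have hJsurj : Function.Surjective Jr :=
    Finite.surjective_of_injective hJinj
  intro a b
  constructor
  · obtain ⟨x, hx⟩ := (hLbij a).2 b
    exact ⟨x, hx, fun x' hx' => hLinj a (hx'.trans hx.symm)⟩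
  · obtain ⟨x, hx⟩ := hJsurj a
    refine ⟨mul x b, ?_, ?_⟩
    · show mul (mul x b) a = b
      rw [← hx, hCI]
    · intro y' h'
      apply hRinj x
      show mul y' (Jr x) = mul (mul x b) (Jr x)
      rw [hCI x b, hx, h']
end

section
/- If (Q, ·) is a groupoid with maps J_r and J_l satisfying both (x · y) · J_r(x) = y and J_l(x) · (y · x) = y for all x, y ∈ Q (a CI-groupoid), then (Q, ·) is a quasigroup. -/
theorem stmt_17 {Q : Type*} (mul : Q → Q → Q) (Jr Jl : Q → Q)
    (hCIr : ∀ x y, mul (mul x y) (Jr x) = y)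
    (hCIl : ∀ x y, mul (Jl x) (mul y x) = y) :
    ∀ a b, (∃! x, mul a x = b) ∧ (∃! y, mul y a = b) := by
  -- left mult by x is injective: from hCIr
  have linj : ∀ x {u v}, mul x u = mul x v → u = v := by
    intro x u v h
    have := hCIr x u
    rw [h, hCIr] at this
    exact this.symm
  have rinj : ∀ x {u v}, mul u x = mul v x → u = v := by
    intro x u v h
    have := hCIl x u
    rw [h, hCIl] at this
    exact this.symm
  have hJrJl : ∀ x, Jr (Jl x) = x := by
    intro x
    have h : ∀ y, mul y (Jr (Jl x)) = mul y x := by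
      intro y
      have := hCIr (Jl x) (mul y x)
      rw [hCIl] at this
      exact this
    exact linj x (by rw [← h x])
  have hJlJr : ∀ x, Jl (Jr x) = x := by
    intro x
    have h : ∀ y, mul (Jl (Jr x)) y = mul x y := by
      intro y
      have := hCIl (Jr x) (mul x y)
      rw [hCIr] at this
      exact this
    exact rinj x (by rw [← h x])
  intro a b
  constructor
  · refine ⟨mul b (Jr a), ?_, ?_⟩
    · have := hCIl (Jr a) b
      rw [hJlJr] at this
      exact this
    · intro y hy
      rw [← hy, hCIr]
  · refine ⟨mul (Jl a) b, ?_, ?_⟩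
    · have := hCIr (Jl a) b
      rw [hJrJl] at this
      exact this
    · intro y hy
      rw [← hy, hCIl]
end
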